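/- Let V be a pre-Lie algebra and define iterated right powers by x^[1] = x and x^[k+1] = x^[k] ∘ x. Then for all a, b ∈ V and all N ≥ 1, the N-fold iterated bracket ad(b)^N(a) = [...[[a,b],b],...,b] (N brackets) equals Σ_{i=0}^{N} (−1)^i · C(N,i) · (L_i ∘ a) ∘_R b^{(N−i)}, where L_i ∘ a ∘_R b^{(m)} denotes ((...((b∘b)∘b)...∘b)∘a)∘b)∘b)...)∘b with i left factors of b before a and m = N−i right factors of b after a (left-normed), and [a,b] = a∘b − b∘a. -/
import Mathlib


/-- Left-normed power: `leftPow b n` is the product of `n+1` copies of `b`,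
`(((b*b)*b)*⋯)*b`. -/
def leftPow {R : Type*} [Mul R] (b : R) : ℕ → R
  | 0 => b
  | n + 1 => leftPow b n * b

/-- The left-normed expression `T b a i m = ((((b∘⋯∘b)∘a)∘b)∘⋯)∘b`
with `i` factors of `b` to the left of `a` and `m` factors of `b` to the right. -/
def T {R : Type*} [Mul R] (b a : R) (i m : ℕ) : R :=
  (fun z => z * b)^[m] (if i = 0 then a else leftPow b (i - 1) * a)

section Aux
variable {R : Type*} [NonUnitalNonAssocRing R]

private lemma iter_sub (b x y : R) (m : ℕ) :
    (fun z => z * b)^[m] (x - y)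
      = (fun z => z * b)^[m] x - (fun z => z * b)^[m] y := by
  induction m with
  | zero => simp
  | succ m ih => simp [Function.iterate_succ_apply', ih, sub_mul]

private lemma T_sub (b x y : R) (i m : ℕ) :
    T b (x - y) i m = T b x i m - T b y i m := by
  unfold T
  rcases i with _ | j
  · simp [iter_sub]
  · simp [mul_sub, iter_sub]

private lemma key (hpre : ∀ a b c : R, (a * b) * c - a * (b * c) = (a * c) * b - a * (c * b))
    (a b : R) (i m : ℕ) :
    T b (a * b - b * a) i m = T b a i (m + 1) - T b a (i + 1) m := by
  rw [T_sub]
  unfold T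
  rw [Function.iterate_succ_apply]
  rcases i with _ | j
  · simp [leftPow]
  · simp only [Nat.succ_ne_zero, if_false, Nat.succ_sub_one]
    rw [← iter_sub, ← iter_sub]
    congr 1
    have h := hpre (leftPow b j) a b
    show leftPow b j * (a * b) - leftPow b j * (b * a)
        = (leftPow b j * a) * b - leftPow b (j + 1) * a
    rw [show leftPow b (j + 1) = leftPow b j * b from rfl]
    rw [sub_eq_sub_iff_sub_eq_sub]
    have h2 := congrArg Neg.neg h
    simp only [neg_sub] at h2
    exact h2

private lemma main_ind (hpre : ∀ a b c : R, (a * b) * c - a * (b * c) = (a * c) * b - a * (c * b))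
    (b : R) : ∀ (N : ℕ) (a : R),
    (fun z => z * b - b * z)^[N] a
      = ∑ i ∈ Finset.range (N + 1), ((-1) ^ i * (N.choose i) : ℤ) • T b a i (N - i) := by
  intro N
  induction N with
  | zero => intro a; simp [T]
  | succ N ih =>
    intro a
    rw [Function.iterate_succ_apply]
    show (fun z => z * b - b * z)^[N] (a * b - b * a) = _
    rw [ih (a * b - b * a)]
    set A : ℕ → R := fun i => T b a i (N + 1 - i) with hA
    have h1 : ∀ i ∈ Finset.range (N + 1),
        ((-1) ^ i * (N.choose i) : ℤ) • T b (a * b - b * a) i (N - i)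
          = ((-1) ^ i * (N.choose i) : ℤ) • A i
            - ((-1) ^ i * (N.choose i) : ℤ) • A (i + 1) := by
      intro i hi
      rw [Finset.mem_range] at hi
      rw [key hpre, smul_sub, hA]
      have h2 : N - i + 1 = N + 1 - i := by omega
      have h3 : N - i = N + 1 - (i + 1) := by omega
      rw [h2, h3]
    rw [Finset.sum_congr rfl h1, Finset.sum_sub_distrib]
    show _ = ∑ i ∈ Finset.range (N + 1 + 1), ((-1) ^ i * ((N+1).choose i) : ℤ) • A i
    rw [Finset.sum_range_succ' (fun i => ((-1) ^ i * ((N+1).choose i) : ℤ) • A i) (N + 1)]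
    have hsplit : ∀ i ∈ Finset.range (N + 1),
        ((-1) ^ (i+1) * ((N+1).choose (i+1)) : ℤ) • A (i + 1)
          = -((( -1) ^ i * (N.choose i) : ℤ) • A (i + 1))
            + ((-1) ^ (i+1) * (N.choose (i+1)) : ℤ) • A (i + 1) := by
      intro i _
      rw [Nat.choose_succ_succ]
      push_cast
      rw [mul_add, add_smul]
      congr 1
      have : ((-1:ℤ) ^ (i+1) * (N.choose i)) = -((-1) ^ i * (N.choose i)) := by ring
      rw [this, neg_smul]
    rw [Finset.sum_congr rfl hsplit, Finset.sum_add_distrib]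
    have hfirst : ∑ i ∈ Finset.range (N + 1), ((-1) ^ i * (N.choose i) : ℤ) • A i
        = (∑ i ∈ Finset.range (N + 1), ((-1) ^ (i+1) * (N.choose (i+1)) : ℤ) • A (i+1))
          + A 0 := by
      rw [Finset.sum_range_succ' (fun i => ((-1) ^ i * (N.choose i) : ℤ) • A i) N]
      rw [Finset.sum_range_succ (fun i => ((-1) ^ (i+1) * (N.choose (i+1)) : ℤ) • A (i+1)) N]
      simp [Nat.choose_succ_self]
    rw [hfirst]
    simp only [pow_zero, one_mul, Nat.choose_zero_right, Nat.cast_one, one_smul]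
    rw [Finset.sum_neg_distrib]
    abel

end Aux

/-- In a pre-Lie algebra, the `N`-fold iterated bracket `[...[[a,b],b],...,b]` equals
`Σ_{i=0}^{N} (-1)^i C(N,i) · T(i,a,N-i)`. -/
theorem stmt_4 {R : Type*} [NonUnitalNonAssocRing R]
    (hpre : ∀ a b c : R, (a * b) * c - a * (b * c) = (a * c) * b - a * (c * b))
    (a b : R) (N : ℕ) (hN : 1 ≤ N) :
    (fun z => z * b - b * z)^[N] a
      = ∑ i ∈ Finset.range (N + 1), ((-1) ^ i * (N.choose i) : ℤ) • T b a i (N - i) := by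
  exact main_ind hpre b N a
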